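/- Let P ∈ ℂ[x] be a polynomial of degree d ≥ 1. Then the sum over all c ∈ ℂ of the quantity (d minus the number of distinct roots of P - c) equals d - 1. Equivalently, if y_1, …, y_n are the distinct critical values of P and k_i is the number of distinct roots of P - y_i, then k_1 + ⋯ + k_n = (n-1)·d + 1. -/
import Mathlib

open Polynomial

theorem riemann_hurwitz_for_polynomials (P : ℂ[X]) (h : 1 ≤ P.natDegree) :
    ∑ᶠ c : ℂ, (P.natDegree - ((P - C c).roots.toFinset.card)) = P.natDegree - 1 := by
  classical
  set d := P.natDegree with hd
  have hP0 : P ≠ 0 := fun hc => by simp [hc] at hd; omega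
  have hP' : derivative P ≠ 0 := fun hc => by
    have := Polynomial.natDegree_eq_zero_of_derivative_eq_zero hc; omega
  have hdeg' : (derivative P).natDegree = d - 1 := by
    have := Polynomial.degree_derivative_eq P (by omega)
    exact natDegree_eq_of_degree_eq_some this
  have hsub0 : ∀ c : ℂ, P - C c ≠ 0 := by
    intro c hc
    have : (P - C c).natDegree = d := Polynomial.natDegree_sub_C
    rw [hc] at this
    simp at this; omega
  have hsubdeg : ∀ c : ℂ, (P - C c).natDegree = d := fun c => Polynomial.natDegree_sub_C
  have hcard : ∀ c : ℂ, Multiset.card (P - C c).roots = d := by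
    intro c
    rw [← hsubdeg c]
    exact (Polynomial.splits_iff_card_roots.mp (IsAlgClosed.splits _))
  -- root sets
  set t : ℂ → Finset ℂ := fun c => (P - C c).roots.toFinset with ht
  have hmem : ∀ c x, x ∈ t c ↔ P.eval x = c := by
    intro c x
    rw [ht]
    simp [Multiset.mem_toFinset, Polynomial.mem_roots (hsub0 c), Polynomial.IsRoot,
      sub_eq_zero]
  -- key identity: d - (t c).card = ∑ x in t c, rootMultiplicity x P'
  have key : ∀ c : ℂ, d - (t c).card = ∑ x ∈ t c, (derivative P).rootMultiplicity x := by
    intro c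
    have h1 : ∀ x ∈ t c, (derivative P).rootMultiplicity x
        = (P - C c).rootMultiplicity x - 1 := by
      intro x hx
      have hroot : (P - C c).IsRoot x := by
        rw [Polynomial.IsRoot, Polynomial.eval_sub, Polynomial.eval_C, (hmem c x).mp hx]
        ring
      have := Polynomial.derivative_rootMultiplicity_of_root hroot
      rwa [show derivative (P - C c) = derivative P by simp] at this
    rw [Finset.sum_congr rfl h1]
    have h2 : ∀ x ∈ t c, (1 : ℕ) ≤ (P - C c).rootMultiplicity x := by
      intro x hx
      rw [← Polynomial.count_roots]
      exact Multiset.one_le_count_iff_mem.mpr (Multiset.mem_toFinset.mp hx)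
    rw [Finset.sum_tsub_distrib (t c) h2]
    have h3 : ∑ x ∈ t c, (P - C c).rootMultiplicity x = d := by
      rw [← hcard c]
      simp only [← Polynomial.count_roots]
      exact (Multiset.toFinset_sum_count_eq _)
    rw [h3, Finset.card_eq_sum_ones (t c)]
  -- critical values
  set S : Finset ℂ := (derivative P).roots.toFinset.image (fun x => P.eval x) with hS
  have hsupp : Function.support (fun c : ℂ => d - (t c).card) ⊆ ↑S := by
    intro c hc
    rw [Function.mem_support, key c] at hc
    obtain ⟨x, hx, hxm⟩ := Finset.exists_ne_zero_of_sum_ne_zero hc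
    have hxroot : x ∈ (derivative P).roots := by
      rw [Polynomial.mem_roots hP']
      exact Polynomial.rootMultiplicity_pos hP' |>.mp (Nat.pos_of_ne_zero hxm)
    rw [hS]
    exact Finset.mem_coe.mpr (Finset.mem_image.mpr
      ⟨x, Multiset.mem_toFinset.mpr hxroot, (hmem c x).mp hx⟩)
  have h0 : ∑ᶠ c : ℂ, (d - (P - C c).roots.toFinset.card) = ∑ c ∈ S, (d - (t c).card) :=
    finsum_eq_sum_of_support_subset _ hsupp
  rw [h0]
  -- now a finite sum over S
  have hdisj : (↑S : Set ℂ).PairwiseDisjoint t := by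
    intro c1 _ c2 _ hne
    rw [Function.onFun, Finset.disjoint_left]
    intro x h1 h2
    exact hne (((hmem c1 x).mp h1).symm.trans ((hmem c2 x).mp h2))
  calc ∑ c ∈ S, (d - (t c).card)
      = ∑ c ∈ S, ∑ x ∈ t c, (derivative P).rootMultiplicity x :=
        Finset.sum_congr rfl (fun c _ => key c)
    _ = ∑ x ∈ S.biUnion t, (derivative P).rootMultiplicity x :=
        (Finset.sum_biUnion hdisj).symm
    _ = ∑ x ∈ (derivative P).roots.toFinset, (derivative P).rootMultiplicity x := by
        refine (Finset.sum_subset ?_ ?_).symm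
        · intro x hx
          rw [Multiset.mem_toFinset, Polynomial.mem_roots hP'] at hx
          refine Finset.mem_biUnion.mpr ⟨P.eval x, ?_, (hmem _ x).mpr rfl⟩
          exact Finset.mem_image.mpr ⟨x, Multiset.mem_toFinset.mpr
            ((Polynomial.mem_roots hP').mpr hx), rfl⟩
        · intro x _ hx
          rw [Multiset.mem_toFinset, Polynomial.mem_roots hP'] at hx
          rw [← Polynomial.count_roots]
          by_contra hc
          exact hx ((Polynomial.mem_roots hP').mp
            (Multiset.count_pos.mp (Nat.pos_of_ne_zero hc)))
    _ = Multiset.card (derivative P).roots := by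
        simp only [← Polynomial.count_roots]
        exact Multiset.toFinset_sum_count_eq _
    _ = d - 1 := by
        rw [← hdeg']
        exact Polynomial.splits_iff_card_roots.mp (IsAlgClosed.splits _)
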